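/- The set of coefficient vectors (a₀, …, a_{n-1}) ∈ ℝⁿ for which the monic polynomial λⁿ + a_{n-1}λ^{n-1} + ⋯ + a₀ has all roots with strictly negative real part is an open subset of ℝⁿ. -/

import Mathlib

open Polynomial Finset

private lemma root_bound' (n : ℕ) (a : Fin n → ℝ) (z : ℂ)
    (hz : z ^ n + ∑ i : Fin n, (a i : ℂ) * z ^ (i : ℕ) = 0) :
    ‖z‖ ≤ max 1 (∑ i : Fin n, |a i|) := by
  by_contra h
  push_neg at h
  have h1 : 1 < ‖z‖ := lt_of_le_of_lt (le_max_left _ _) h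
  have hS : (∑ i : Fin n, |a i|) < ‖z‖ := lt_of_le_of_lt (le_max_right _ _) h
  rcases Nat.eq_zero_or_pos n with hn | hn
  · subst hn; simp at hz
  have hzn : z ^ n = -∑ i : Fin n, (a i : ℂ) * z ^ (i : ℕ) := by linear_combination hz
  have hb : ‖z‖ ^ n ≤ (∑ i : Fin n, |a i|) * ‖z‖ ^ (n - 1) := by
    calc ‖z‖ ^ n = ‖z ^ n‖ := (norm_pow _ _).symm
    _ = ‖∑ i : Fin n, (a i : ℂ) * z ^ (i : ℕ)‖ := by
        rw [hzn, norm_neg]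
    _ ≤ ∑ i : Fin n, ‖(a i : ℂ) * z ^ (i : ℕ)‖ :=
        norm_sum_le _ _
    _ ≤ ∑ i : Fin n, |a i| * ‖z‖ ^ (n - 1) := by
        apply Finset.sum_le_sum
        intro i _
        rw [norm_mul, norm_pow, Complex.norm_real, Real.norm_eq_abs]
        exact mul_le_mul_of_nonneg_left
          (pow_le_pow_right₀ h1.le (Nat.le_sub_one_of_lt i.isLt)) (abs_nonneg _)
    _ = (∑ i : Fin n, |a i|) * ‖z‖ ^ (n - 1) := by rw [Finset.sum_mul]
  have hpos : 0 < ‖z‖ ^ (n - 1) := pow_pos (lt_trans one_pos h1) _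
  have hlt : (∑ i : Fin n, |a i|) * ‖z‖ ^ (n - 1)
      < ‖z‖ * ‖z‖ ^ (n - 1) :=
    mul_lt_mul_of_pos_right hS hpos
  have heq : ‖z‖ * ‖z‖ ^ (n - 1) = ‖z‖ ^ n := by
    rw [← pow_succ']
    congr 1
    omega
  linarith

/-- The set of coefficient vectors in `ℝⁿ` whose monic polynomial
`λⁿ + a_{n-1}λ^{n-1} + ⋯ + a₀` has all roots with negative real part is open. -/
theorem hurwitz_coeff_set_isOpen (n : ℕ) :
    IsOpen {a : Fin n → ℝ |
      ∀ z : ℂ, aeval z (X ^ n + ∑ i : Fin n, C (a i) * X ^ (i : ℕ) : ℝ[X]) = 0 →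
        z.re < 0} := by
  -- rewrite the set using the explicit evaluation
  have hset : {a : Fin n → ℝ |
      ∀ z : ℂ, aeval z (X ^ n + ∑ i : Fin n, C (a i) * X ^ (i : ℕ) : ℝ[X]) = 0 →
        z.re < 0} =
      {a : Fin n → ℝ |
      ∀ z : ℂ, z ^ n + ∑ i : Fin n, (a i : ℂ) * z ^ (i : ℕ) = 0 → z.re < 0} := by
    ext a
    simp [Complex.coe_algebraMap]
  rw [hset]
  rw [Metric.isOpen_iff]
  intro a ha
  -- radius bound for roots of perturbed polynomials
  set R : ℝ := max 1 ((∑ i : Fin n, |a i|) + n) with hR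
  have hR1 : (1 : ℝ) ≤ R := le_max_left _ _
  -- the compact set
  set K : Set ℂ := Metric.closedBall 0 R ∩ {z : ℂ | 0 ≤ z.re} with hK
  have hKc : IsCompact K :=
    (isCompact_closedBall 0 R).inter_right (isClosed_le continuous_const Complex.continuous_re)
  have hK0 : (0 : ℂ) ∈ K := by
    constructor
    · simpa using (by linarith : (0:ℝ) ≤ R)
    · simp
  -- p a is nonvanishing on K, get a positive minimum
  have hcont : Continuous fun z : ℂ => ‖z ^ n + ∑ i : Fin n, (a i : ℂ) * z ^ (i : ℕ)‖ := by
    apply continuous_norm.comp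
    exact (continuous_pow n).add (continuous_finset_sum _ fun i _ =>
      continuous_const.mul (continuous_pow _))
  obtain ⟨z₀, hz₀K, hz₀min⟩ := hKc.exists_isMinOn ⟨0, hK0⟩ hcont.continuousOn
  set ε : ℝ := ‖z₀ ^ n + ∑ i : Fin n, (a i : ℂ) * z₀ ^ (i : ℕ)‖ with hε
  have hεpos : 0 < ε := by
    rcases (norm_nonneg (z₀ ^ n + ∑ i : Fin n, (a i : ℂ) * z₀ ^ (i : ℕ))).lt_or_eq with h | h
    · exact h
    · exfalso
      have hz : z₀ ^ n + ∑ i : Fin n, (a i : ℂ) * z₀ ^ (i : ℕ) = 0 :=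
        norm_eq_zero.mp h.symm
      have := ha z₀ hz
      exact absurd hz₀K.2 (not_le.mpr this)
  -- choose δ
  set D : ℝ := n * R ^ (n - 1) with hD
  have hDpos : 0 < D + 1 := by positivity
  refine ⟨min 1 (ε / (D + 1)), lt_min one_pos (div_pos hεpos hDpos), ?_⟩
  intro b hb
  simp only [Metric.mem_ball] at hb
  have hb1 : dist b a < 1 := lt_of_lt_of_le hb (min_le_left _ _)
  have hb2 : dist b a < ε / (D + 1) := lt_of_lt_of_le hb (min_le_right _ _)
  have hlip : ∀ i : Fin n, |b i - a i| ≤ dist b a := by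
    intro i
    have := dist_le_pi_dist b a i
    rwa [Real.dist_eq] at this
  intro z hz
  by_contra hre
  push_neg at hre
  -- z is a root of p b with nonneg real part; bound |z|
  have hzb : ‖z‖ ≤ R := by
    have h1 := root_bound' n b z hz
    have h2 : (∑ i : Fin n, |b i|) ≤ (∑ i : Fin n, |a i|) + n := by
      calc (∑ i : Fin n, |b i|) ≤ ∑ i : Fin n, (|a i| + 1) := by
            apply Finset.sum_le_sum
            intro i _
            have := hlip i
            have := abs_sub_abs_le_abs_sub (b i) (a i)
            linarith
      _ = (∑ i : Fin n, |a i|) + n := by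
            rw [Finset.sum_add_distrib]
            simp
    calc ‖z‖ ≤ max 1 (∑ i : Fin n, |b i|) := h1
    _ ≤ max 1 ((∑ i : Fin n, |a i|) + n) := max_le_max le_rfl h2
    _ = R := rfl
  have hzK : z ∈ K := by
    constructor
    · simpa [Complex.dist_eq] using hzb
    · exact hre
  -- ε ≤ |p a z| = |p a z - p b z| ≤ D * dist b a < ε
  have h1 : ε ≤ ‖z ^ n + ∑ i : Fin n, (a i : ℂ) * z ^ (i : ℕ)‖ := hz₀min hzK
  have h2 : ‖z ^ n + ∑ i : Fin n, (a i : ℂ) * z ^ (i : ℕ)‖ ≤ D * dist b a := by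
    have heq : z ^ n + ∑ i : Fin n, (a i : ℂ) * z ^ (i : ℕ) =
        ∑ i : Fin n, ((a i : ℂ) - (b i : ℂ)) * z ^ (i : ℕ) := by
      have hsplit : ∑ i : Fin n, ((a i : ℂ) - (b i : ℂ)) * z ^ (i : ℕ) =
          (∑ i : Fin n, (a i : ℂ) * z ^ (i : ℕ)) - ∑ i : Fin n, (b i : ℂ) * z ^ (i : ℕ) := by
        rw [← Finset.sum_sub_distrib]
        exact Finset.sum_congr rfl fun i _ => by ring
      rw [hsplit]
      linear_combination hz
    rw [heq]
    calc ‖∑ i : Fin n, ((a i : ℂ) - (b i : ℂ)) * z ^ (i : ℕ)‖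
        ≤ ∑ i : Fin n, ‖((a i : ℂ) - (b i : ℂ)) * z ^ (i : ℕ)‖ :=
          norm_sum_le _ _
    _ ≤ ∑ i : Fin n, dist b a * R ^ (n - 1) := by
        apply Finset.sum_le_sum
        intro i _
        rw [norm_mul, norm_pow]
        have habs : ‖(a i : ℂ) - (b i : ℂ)‖ = |a i - b i| := by
          rw [← Complex.ofReal_sub, Complex.norm_real, Real.norm_eq_abs]
        rw [habs]
        have hzi : ‖z‖ ^ (i : ℕ) ≤ R ^ (n - 1) := by
          calc ‖z‖ ^ (i : ℕ) ≤ R ^ (i : ℕ) :=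
                pow_le_pow_left₀ (norm_nonneg _) hzb _
          _ ≤ R ^ (n - 1) := pow_le_pow_right₀ hR1 (Nat.le_sub_one_of_lt i.isLt)
        have h3 : |a i - b i| ≤ dist b a := by
          rw [abs_sub_comm]; exact hlip i
        exact mul_le_mul h3 hzi (pow_nonneg (norm_nonneg _) _) dist_nonneg
    _ = D * dist b a := by
        rw [Finset.sum_const, card_univ, Fintype.card_fin, nsmul_eq_mul, hD]
        ring
  have h4 : D * dist b a < ε := by
    have hDnn : 0 ≤ D := by positivity
    have h5 : dist b a * (D + 1) < ε := (lt_div_iff₀ hDpos).mp hb2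
    nlinarith [dist_nonneg (x := b) (y := a)]
  linarith
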